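/- arXiv:2211.03232 — 8 statements merged into one kernel-verified Lean document; each statement's English description precedes it below -/
import Mathlib

section
/- Let m ≥ 1, let ε ≥ 0, and let D be a probability distribution on {0,1}^m that is an ε-biased sample space. Then for any two vectors x, y ∈ ℤ^m with x ≠ y, the probability over a drawn from D that ⟨a, x⟩ = ⟨a, y⟩ (inner products taken over the integers, viewing a as a 0/1 integer vector) is at most 1/2 + ε/2. -/
open Finset

lemma key_aux (m : ℕ) : ∀ (N : ℕ) (z : Fin m → ℤ), (∑ i, (z i).natAbs) ≤ N → z ≠ 0 →
    ∃ I : Finset (Fin m), I.Nonempty ∧ ∀ a : Fin m → Bool,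
      (∑ i, if a i then z i else 0) = 0 →
      (∑ i ∈ I, if a i then (1:ℤ) else 0) % 2 = 0 := by
  intro N
  induction N with
  | zero =>
      intro z hN hz
      exfalso; apply hz; funext i
      have : (z i).natAbs = 0 := by
        have := Finset.sum_eq_zero_iff.mp (Nat.le_zero.mp hN) i (mem_univ i)
        exact this
      simpa [Int.natAbs_eq_zero] using this
  | succ N ih =>
      intro z hN hz
      by_cases hodd : ∃ i, z i % 2 = 1
      · refine ⟨univ.filter (fun i => z i % 2 = 1), ?_, ?_⟩
        · obtain ⟨i, hi⟩ := hodd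
          exact ⟨i, by simp [hi]⟩
        · intro a ha
          have h1 : ((∑ i, if a i then z i else 0) : ℤ) % 2
              = (∑ i, (if a i then z i else 0) % 2) % 2 := Finset.sum_int_mod _ _ _
          rw [ha] at h1
          have h2 : (∑ i, (if a i then z i else 0) % 2)
              = ∑ i ∈ univ.filter (fun i => z i % 2 = 1), (if a i then (1:ℤ) else 0) := by
            rw [Finset.sum_filter]
            apply Finset.sum_congr rfl
            intro i _
            rcases Int.emod_two_eq_zero_or_one (z i) with h | h <;> by_cases hai : a i <;>
              simp [hai, h]
          rw [h2] at h1
          omega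
      · push_neg at hodd
        have hdvd : ∀ i, (2:ℤ) ∣ z i := fun i => Int.dvd_of_emod_eq_zero
          (by rcases Int.emod_two_eq_zero_or_one (z i) with h | h; exact h; exact absurd h (hodd i))
        set w : Fin m → ℤ := fun i => z i / 2 with hw
        have hzw : ∀ i, z i = 2 * w i := fun i => (Int.mul_ediv_cancel' (hdvd i)).symm
        have hwne : w ≠ 0 := by
          intro h; apply hz; funext i
          have := hzw i
          rw [h] at this; simpa using this
        have hmeas : (∑ i, (w i).natAbs) ≤ N := by
          have h2 : (∑ i, (z i).natAbs) = 2 * ∑ i, (w i).natAbs := by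
            rw [Finset.mul_sum]; apply Finset.sum_congr rfl
            intro i _; rw [hzw i]; simp [Int.natAbs_mul]
          have hpos : 1 ≤ ∑ i, (w i).natAbs := by
            by_contra h
            apply hwne; funext i
            have h0 : ∑ i, (w i).natAbs = 0 := by omega
            have : (w i).natAbs = 0 :=
              Finset.sum_eq_zero_iff.mp h0 i (mem_univ i)
            simpa [Int.natAbs_eq_zero] using this
          set A := ∑ i, (z i).natAbs
          set B := ∑ i, (w i).natAbs
          omega
        obtain ⟨I, hIne, hI⟩ := ih w hmeas hwne
        refine ⟨I, hIne, fun a ha => ?_⟩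
        apply hI
        have : (∑ i, if a i then z i else 0) = 2 * ∑ i, if a i then w i else 0 := by
          rw [Finset.mul_sum]; apply Finset.sum_congr rfl
          intro i _; by_cases hai : a i <;> simp [hai, hzw i]
        rw [this] at ha
        omega

/-- If `D` is an ε-biased probability distribution on `{0,1}^m`, then for any
distinct integer vectors `x y : ℤ^m`, the probability (under `D`) that the integer inner
products `⟨a,x⟩` and `⟨a,y⟩` coincide is at most `1/2 + ε/2`. -/
theorem eps_biased_inner_product_collision
    (m : ℕ) (hm : 1 ≤ m) (ε : ℝ) (hε : 0 ≤ ε)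
    (D : (Fin m → Bool) → ℝ)
    (hD0 : ∀ a, 0 ≤ D a) (hD1 : ∑ a, D a = 1)
    (hbias : ∀ I : Finset (Fin m), I.Nonempty →
      |(∑ a ∈ univ.filter (fun a : Fin m → Bool =>
            (∑ i ∈ I, (if a i then (1 : ℤ) else 0)) % 2 = 0), D a) -
        (∑ a ∈ univ.filter (fun a : Fin m → Bool =>
            (∑ i ∈ I, (if a i then (1 : ℤ) else 0)) % 2 = 1), D a)| ≤ ε)
    (x y : Fin m → ℤ) (hxy : x ≠ y) :
    (∑ a ∈ univ.filter (fun a : Fin m → Bool =>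
        (∑ i, (if a i then x i else 0)) = ∑ i, (if a i then y i else 0)), D a)
      ≤ 1 / 2 + ε / 2 := by
  set z : Fin m → ℤ := fun i => x i - y i with hzdef
  have hzne : z ≠ 0 := by
    intro h; apply hxy; funext i
    have : z i = 0 := by rw [h]; rfl
    simp [hzdef] at this; linarith
  obtain ⟨I, hIne, hI⟩ := key_aux m (∑ i, (z i).natAbs) z le_rfl hzne
  set P0 := ∑ a ∈ univ.filter (fun a : Fin m → Bool =>
      (∑ i ∈ I, (if a i then (1 : ℤ) else 0)) % 2 = 0), D a with hP0
  set P1 := ∑ a ∈ univ.filter (fun a : Fin m → Bool =>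
      (∑ i ∈ I, (if a i then (1 : ℤ) else 0)) % 2 = 1), D a with hP1
  have hsub : (univ.filter (fun a : Fin m → Bool =>
        (∑ i, (if a i then x i else 0)) = ∑ i, (if a i then y i else 0))) ⊆
      (univ.filter (fun a : Fin m → Bool =>
        (∑ i ∈ I, (if a i then (1 : ℤ) else 0)) % 2 = 0)) := by
    intro a ha
    rw [mem_filter] at ha ⊢
    refine ⟨mem_univ a, hI a ?_⟩
    have hs : (∑ i, if a i then z i else 0)
        = (∑ i, (if a i then x i else 0)) - ∑ i, (if a i then y i else 0) := by
      rw [← Finset.sum_sub_distrib]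
      apply Finset.sum_congr rfl
      intro i _; by_cases hai : a i <;> simp [hai, hzdef]
    rw [hs, ha.2]; ring
  have hle : (∑ a ∈ univ.filter (fun a : Fin m → Bool =>
        (∑ i, (if a i then x i else 0)) = ∑ i, (if a i then y i else 0)), D a) ≤ P0 :=
    Finset.sum_le_sum_of_subset_of_nonneg hsub (fun a _ _ => hD0 a)
  have hpart : P0 + P1 = 1 := by
    rw [hP0, hP1, ← hD1]
    rw [← Finset.sum_filter_add_sum_filter_not univ
      (fun a : Fin m → Bool => (∑ i ∈ I, (if a i then (1 : ℤ) else 0)) % 2 = 0) D]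
    congr 1
    apply Finset.sum_congr _ (fun _ _ => rfl)
    apply Finset.filter_congr
    intro a _
    rcases Int.emod_two_eq_zero_or_one (∑ i ∈ I, (if a i then (1 : ℤ) else 0)) with h | h <;>
      simp [h]
  have habs := hbias I hIne
  rw [← hP0, ← hP1] at habs
  have := abs_le.mp habs
  linarith
end

section
/- Let n, m be positive integers and let F be a prime with F > 2n. Let S and T be two distinct multisets of elements of {0,1,…,m−1}, each of cardinality at most n. If a : {0,1,…,m−1} → ℤ/Fℤ is chosen uniformly at random, then the probability that Σ_{i∈S} a(i) = Σ_{i∈T} a(i) (sums over the multisets, computed in ℤ/Fℤ) is at most 1/F. -/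
open Finset

lemma multiset_map_sum_count {m F : ℕ} (S : Multiset (Fin m)) (a : Fin m → ZMod F) :
    (S.map a).sum = ∑ i : Fin m, (S.count i : ZMod F) * a i := by
  rw [Finset.sum_multiset_map_count]
  rw [← Finset.sum_subset (Finset.subset_univ S.toFinset)]
  · exact Finset.sum_congr rfl (fun i _ => by rw [nsmul_eq_mul])
  · intro x _ hx
    simp [Multiset.count_eq_zero_of_notMem (by simpa using hx)]

/-- Let `F > 2n` be a prime, and `S ≠ T` two multisets over `{0,…,m−1}` of
cardinality at most `n`. For `a : Fin m → ZMod F` uniformly random, the probability that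
the sums `∑_{i∈S} a i` and `∑_{i∈T} a i` (in `ZMod F`) coincide is at most `1/F`. -/
theorem random_map_multiset_sum_collision
    (n m F : ℕ) (hn : 1 ≤ n) (hm : 1 ≤ m) (hF : Nat.Prime F) (hFn : 2 * n < F)
    [NeZero F]
    (S T : Multiset (Fin m)) (hST : S ≠ T)
    (hScard : Multiset.card S ≤ n) (hTcard : Multiset.card T ≤ n) :
    ((univ.filter (fun a : Fin m → ZMod F =>
        (S.map a).sum = (T.map a).sum)).card : ℝ) / (F ^ m : ℝ) ≤ 1 / F := by
  haveI := Fact.mk hF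
  have hnF : n < F := lt_of_le_of_lt (by omega) hFn
  -- find a coordinate with different counts
  obtain ⟨i0, hi0⟩ : ∃ i0, S.count i0 ≠ T.count i0 := by
    by_contra h
    push_neg at h
    exact hST (Multiset.ext.mpr h)
  set c : Fin m → ZMod F := fun i => (S.count i : ZMod F) - (T.count i : ZMod F) with hc
  have hc0 : c i0 ≠ 0 := by
    intro h
    apply hi0
    have h' : ((S.count i0 : ZMod F)) = (T.count i0 : ZMod F) := by
      have := sub_eq_zero.mp h
      exact this
    have h1 : S.count i0 < F := lt_of_le_of_lt (le_trans (Multiset.count_le_card _ _) hScard) hnF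
    have h2 : T.count i0 < F := lt_of_le_of_lt (le_trans (Multiset.count_le_card _ _) hTcard) hnF
    have := congrArg ZMod.val h'
    rwa [ZMod.val_cast_of_lt h1, ZMod.val_cast_of_lt h2] at this
  -- rewrite the condition
  have hcond : ∀ a : Fin m → ZMod F,
      ((S.map a).sum = (T.map a).sum) ↔ ∑ i : Fin m, c i * a i = 0 := by
    intro a
    rw [multiset_map_sum_count, multiset_map_sum_count, ← sub_eq_zero, ← Finset.sum_sub_distrib]
    constructor <;> intro h <;> [skip; skip] <;>
      · convert h using 2 with i
        simp [hc, sub_mul]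
  -- injectivity of the restriction
  have hinj : Set.InjOn (fun (a : Fin m → ZMod F) => (fun i : {i : Fin m // i ≠ i0} => a i))
      ↑(univ.filter (fun a : Fin m → ZMod F => (S.map a).sum = (T.map a).sum)) := by
    intro a ha b hb hab
    simp only [Finset.coe_filter, Set.mem_setOf_eq] at ha hb
    rw [hcond] at ha hb
    have hrest : ∀ i : Fin m, i ≠ i0 → a i = b i := by
      intro i hi
      exact congrFun hab ⟨i, hi⟩
    have key : c i0 * a i0 = c i0 * b i0 := by
      have esum : ∑ i ∈ Finset.univ.erase i0, c i * a i
          = ∑ i ∈ Finset.univ.erase i0, c i * b i := by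
        apply Finset.sum_congr rfl
        intro i hi
        rw [hrest i (Finset.ne_of_mem_erase hi)]
      have h := ha.2.trans hb.2.symm
      rw [← Finset.add_sum_erase Finset.univ (fun i => c i * a i) (Finset.mem_univ i0),
        ← Finset.add_sum_erase Finset.univ (fun i => c i * b i) (Finset.mem_univ i0)] at h
      rw [esum] at h
      exact add_right_cancel h
    have h0 : a i0 = b i0 := mul_left_cancel₀ hc0 key
    funext i
    by_cases h : i = i0
    · rw [h]; exact h0
    · exact hrest i h
  -- cardinality bound
  have hcard : (univ.filter (fun a : Fin m → ZMod F =>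
      (S.map a).sum = (T.map a).sum)).card ≤ F ^ (m - 1) := by
    have := Finset.card_le_card_of_injOn
      (fun (a : Fin m → ZMod F) => (fun i : {i : Fin m // i ≠ i0} => a i))
      (fun a _ => Finset.mem_univ _) hinj
    calc _ ≤ (Finset.univ : Finset ({i : Fin m // i ≠ i0} → ZMod F)).card := this
      _ = F ^ (m - 1) := by
        rw [Finset.card_univ, Fintype.card_fun, ZMod.card]
        congr 1
        rw [Fintype.card_subtype_compl, Fintype.card_subtype_eq, Fintype.card_fin]
  -- conclude
  have hFpos : (0:ℝ) < F := by exact_mod_cast hF.pos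
  rw [div_le_div_iff₀ (by positivity) hFpos]
  calc ((univ.filter (fun a : Fin m → ZMod F =>
        (S.map a).sum = (T.map a).sum)).card : ℝ) * F
      ≤ (F:ℝ) ^ (m - 1) * F := by
        apply mul_le_mul_of_nonneg_right _ hFpos.le
        exact_mod_cast hcard
    _ = (F:ℝ) ^ m := by rw [← pow_succ, Nat.sub_add_cancel hm]
    _ = 1 * (F:ℝ) ^ m := by ring
end

section
/- Let F be an odd positive integer. For every real z ∈ [0, 2F], one has TW_F(z) = TW_{F/2}(z) if and only if z ∈ [0, F/2] ∪ [3F/2, 2F]. Moreover, for every integer z with 0 ≤ z < 2F and z ∉ [0, F/2] ∪ [3F/2, 2F] (equivalently (F+1)/2 ≤ z ≤ (3F−1)/2), one has TW_F(z) − TW_{F/2}(z) ≥ 1. -/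
/-- `rmod z P` is the representative of `z` modulo `P` in `[0, P)` (for `P > 0`). -/
noncomputable def rmod (z P : ℝ) : ℝ := z - P * ⌊z / P⌋

/-- The triangular wave `TW_P(z) = T_P(z mod 2P)`, where `T_P(x) = x` for `x ≤ P` and
`T_P(x) = 2P − x` for `x > P`. -/
noncomputable def TW (P z : ℝ) : ℝ :=
  if rmod z (2 * P) ≤ P then rmod z (2 * P) else 2 * P - rmod z (2 * P)

lemma rmod_of_lt {z P : ℝ} (hP : 0 < P) (h0 : 0 ≤ z) (h1 : z < P) : rmod z P = z := by
  have h : ⌊z / P⌋ = 0 := by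
    rw [Int.floor_eq_zero_iff]
    exact ⟨div_nonneg h0 hP.le, (div_lt_one hP).mpr h1⟩
  simp [rmod, h]

lemma rmod_of_lt2 {z P : ℝ} (hP : 0 < P) (h0 : P ≤ z) (h1 : z < 2 * P) : rmod z P = z - P := by
  have h : ⌊z / P⌋ = 1 := by
    have : (1 : ℝ) ≤ z / P := (one_le_div hP).mpr h0
    have h2 : z / P < 2 := (div_lt_iff₀ hP).mpr (by linarith)
    rw [Int.floor_eq_iff]
    constructor <;> push_cast <;> linarith
  rw [rmod, h]; push_cast; ring

lemma rmod_two_self {P : ℝ} (hP : 0 < P) : rmod (2 * P) P = 0 := by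
  have h : (2 * P) / P = 2 := by field_simp
  have h2 : ⌊(2:ℝ)⌋ = 2 := by norm_num
  rw [rmod, h, h2]
  push_cast; ring

lemma rmod_self {P : ℝ} (hP : 0 < P) : rmod P P = 0 := by
  have h : P / P = 1 := div_self hP.ne'
  have h2 : ⌊(1:ℝ)⌋ = 1 := by norm_num
  rw [rmod, h, h2]
  push_cast; ring

lemma twF {F : ℝ} (hF : 0 < F) {z : ℝ} (h0 : 0 ≤ z) (h2 : z ≤ 2 * F) :
    TW F z = if z ≤ F then z else 2 * F - z := by
  rcases eq_or_lt_of_le h2 with rfl | hlt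
  · have : rmod (2 * F) (2 * F) = 0 := rmod_self (by linarith)
    rw [TW, this]
    have : ¬ (2 * F ≤ F) := by linarith
    simp [hF.le, this]
  · rw [TW, rmod_of_lt (by linarith) h0 hlt]

lemma twHalf {F : ℝ} (hF : 0 < F) {z : ℝ} (h0 : 0 ≤ z) (h2 : z ≤ 2 * F) :
    TW (F / 2) z = if z < F then (if z ≤ F / 2 then z else F - z)
      else (if z ≤ 3 * F / 2 then z - F else 2 * F - z) := by
  have hP : 2 * (F / 2) = F := by ring
  rcases lt_or_ge z F with h | h
  · rw [TW, hP, rmod_of_lt hF h0 h, if_pos h]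
  · rcases eq_or_lt_of_le h2 with rfl | hlt
    · have : rmod (2 * F) F = 0 := rmod_two_self hF
      rw [TW, hP, this]
      have h3 : ¬ (2 * F < F) := by linarith
      have h4 : ¬ (2 * F ≤ 3 * F / 2) := by linarith
      simp only [h3, h4, if_false]
      rw [if_pos (by linarith : (0:ℝ) ≤ F / 2)]
      ring
    · rw [TW, hP, rmod_of_lt2 hF h hlt]
      have h3 : ¬ (z < F) := by linarith
      simp only [h3, if_false]
      rcases le_or_gt z (3 * F / 2) with h4 | h4
      · rw [if_pos (by linarith), if_pos h4]
      · rw [if_neg (by linarith), if_neg (by linarith)]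
        ring

/-- For an odd positive integer `F`: for every real `z ∈ [0, 2F]`,
`TW_F(z) = TW_{F/2}(z)` iff `z ∈ [0, F/2] ∪ [3F/2, 2F]`; moreover, for every integer `z`
with `0 ≤ z < 2F` not lying in that union, `TW_F(z) − TW_{F/2}(z) ≥ 1`. -/
theorem triangular_wave_comparison (F : ℕ) (hF : 0 < F) (hodd : Odd F) :
    (∀ z : ℝ, z ∈ Set.Icc (0 : ℝ) (2 * F) →
      (TW (F : ℝ) z = TW ((F : ℝ) / 2) z ↔
        z ∈ Set.Icc (0 : ℝ) ((F : ℝ) / 2) ∪ Set.Icc (3 * (F : ℝ) / 2) (2 * F))) ∧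
    (∀ z : ℤ, 0 ≤ z → z < 2 * F →
      (z : ℝ) ∉ Set.Icc (0 : ℝ) ((F : ℝ) / 2) ∪ Set.Icc (3 * (F : ℝ) / 2) (2 * F) →
      1 ≤ TW (F : ℝ) (z : ℝ) - TW ((F : ℝ) / 2) (z : ℝ)) := by
  have hF1 : (1 : ℝ) ≤ F := by exact_mod_cast hF
  have hFpos : (0 : ℝ) < F := by linarith
  constructor
  · intro z hz
    obtain ⟨h0, h2⟩ := hz
    rw [twF hFpos h0 h2, twHalf hFpos h0 h2]
    simp only [Set.mem_union, Set.mem_Icc]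
    split_ifs with hA hB hC hD hD <;>
      constructor <;> intro h <;>
      first
        | linarith
        | (left; constructor <;> linarith)
        | (right; constructor <;> linarith)
        | (rcases h with ⟨ha, hb⟩ | ⟨ha, hb⟩ <;> linarith)
  · intro z hz0 hz2 hnot
    simp only [Set.mem_union, Set.mem_Icc, not_or, not_and_or, not_le] at hnot
    have hz0' : (0 : ℝ) ≤ (z : ℝ) := by exact_mod_cast hz0
    have hz2'' : (z : ℝ) < 2 * F := by exact_mod_cast hz2
    have hz2' : (z : ℝ) ≤ 2 * F := hz2''.le
    have hlow : (F : ℝ) / 2 < z := by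
      rcases hnot.1 with h | h
      · linarith
      · exact h
    have hhigh : (z : ℝ) < 3 * (F : ℝ) / 2 := by
      rcases hnot.2 with h | h
      · exact h
      · linarith
    -- integrality
    have hl : (F : ℤ) < 2 * z := by
      have : (F : ℝ) < 2 * z := by linarith
      exact_mod_cast this
    have hh : 2 * z < 3 * F := by
      have : 2 * (z : ℝ) < 3 * F := by linarith
      exact_mod_cast this
    have hl' : (F : ℝ) + 1 ≤ 2 * z := by exact_mod_cast hl
    have hh' : 2 * (z : ℝ) ≤ 3 * F - 1 := by
      have : 2 * z ≤ 3 * (F : ℤ) - 1 := by omega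
      exact_mod_cast this
    rw [twF hFpos hz0' hz2', twHalf hFpos hz0' hz2']
    split_ifs <;> linarith
end

section
/- Let F be a positive integer. For every nonnegative integer z, let c(z) = 0 if (z mod 2F) ≤ F − 1 and c(z) = 1 if F ≤ (z mod 2F) ≤ 2F − 1. Then z mod F = ReLU(2F·c(z) − 2·TW_F(z)) − F·c(z) + TW_F(z), where ReLU(t) = max(0, t). -/
lemma rmod_natCast (z m : ℕ) (hm : 0 < m) : rmod (z : ℝ) (m : ℝ) = ((z % m : ℕ) : ℝ) := by
  have hm' : (0:ℝ) < m := by exact_mod_cast hm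
  have hfloor : ⌊(z : ℝ) / m⌋ = ((z / m : ℕ) : ℤ) := by
    rw [Int.floor_eq_iff]
    push_cast
    constructor
    · rw [le_div_iff₀ hm']
      exact_mod_cast Nat.div_mul_le_self z m
    · rw [div_lt_iff₀ hm']
      have h1 := Nat.div_add_mod z m
      have h2 := Nat.mod_lt z hm
      exact_mod_cast (by nlinarith : z < (z / m + 1) * m)
  have key : (m : ℝ) * ((z / m : ℕ) : ℝ) + ((z % m : ℕ) : ℝ) = (z : ℝ) := by
    exact_mod_cast Nat.div_add_mod z m
  rw [rmod, hfloor, Int.cast_natCast]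
  linarith

/-- For a positive integer `F` and nonnegative integer `z`, with
`c(z) = 0` if `z mod 2F ≤ F − 1` and `c(z) = 1` otherwise, one has
`z mod F = ReLU(2F·c(z) − 2·TW_F(z)) − F·c(z) + TW_F(z)`, where `ReLU(t) = max(0,t)`. -/
theorem mod_eq_relu_triangular_wave (F : ℕ) (hF : 0 < F) (z : ℕ) :
    ((z % F : ℕ) : ℝ) =
      max 0 (2 * (F : ℝ) * (if z % (2 * F) ≤ F - 1 then (0 : ℝ) else 1)
          - 2 * TW (F : ℝ) (z : ℝ))
        - (F : ℝ) * (if z % (2 * F) ≤ F - 1 then (0 : ℝ) else 1) + TW (F : ℝ) (z : ℝ) := by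
  set r := z % (2 * F) with hr
  have h2F : 0 < 2 * F := by omega
  have hrlt : r < 2 * F := Nat.mod_lt _ h2F
  have hmodF : z % F = r % F := (Nat.mod_mod_of_dvd z ⟨2, by ring⟩).symm
  have hrmod : rmod (z : ℝ) (2 * (F : ℝ)) = (r : ℝ) := by
    have := rmod_natCast z (2 * F) h2F
    push_cast at this ⊢
    exact this
  rw [TW, hrmod]
  by_cases hc : r ≤ F - 1
  · have hrF : r < F := by omega
    have : z % F = r := by rw [hmodF, Nat.mod_eq_of_lt hrF]
    rw [if_pos hc, this]
    have h1 : (r : ℝ) ≤ F := by exact_mod_cast hrF.le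
    rw [if_pos h1]
    have : max 0 (2 * (F:ℝ) * 0 - 2 * r) = 0 := by
      apply max_eq_left
      have : (0:ℝ) ≤ r := by positivity
      linarith
    rw [this]; ring
  · have hrF : F ≤ r := by omega
    have hzF : z % F = r - F := by
      rw [hmodF, Nat.mod_eq_sub_mod hrF, Nat.mod_eq_of_lt (by omega)]
    rw [if_neg hc, hzF]
    have hcast : ((r - F : ℕ) : ℝ) = (r : ℝ) - F := by
      push_cast [hrF]; ring
    rw [hcast]
    by_cases h1 : (r : ℝ) ≤ F
    · have hreq : (r : ℝ) = F := le_antisymm h1 (by exact_mod_cast hrF)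
      rw [if_pos h1, hreq]
      rw [max_eq_right (by linarith)]
      ring
    · rw [if_neg h1]
      rw [max_eq_right (by linarith)]
      ring
end

section
/- Let F ≥ 2 and n ≥ 1 be natural numbers and let N = Σ_{i=0}^n C(i+F−1, i) be the number of multisets of a set of size F having at most n elements. Let R be any type, let f be any function from multisets over {0,…,F−1} of cardinality at most n to R, and let Φ be any finite set of functions from R to {0,…,F−1} with |Φ| < log N / log F. Then there exist two distinct multisets A ≠ B over {0,…,F−1}, each of cardinality at most n, such that φ(f(A)) = φ(f(B)) for every φ ∈ Φ. -/
/-- Let `N = ∑_{i=0}^n C(i+F−1, i)` be the number of multisets over a set of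
size `F` with at most `n` elements. For any function `f` from multisets over `{0,…,F−1}` of
cardinality at most `n` to a type `R`, and any finite set `Φ` of functions `R → {0,…,F−1}`
with `|Φ| < log N / log F`, there are two distinct such multisets `A ≠ B` with
`φ(f(A)) = φ(f(B))` for all `φ ∈ Φ`. -/
theorem description_complexity_lower_bound
    (F n : ℕ) (hF : 2 ≤ F) (hn : 1 ≤ n)
    (N : ℕ) (hN : N = ∑ i ∈ Finset.range (n + 1), Nat.choose (i + F - 1) i)
    (R : Type*) (f : {S : Multiset (Fin F) // Multiset.card S ≤ n} → R)
    (Φ : Finset (R → Fin F))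
    (hΦ : (Φ.card : ℝ) < Real.log N / Real.log F) :
    ∃ A B : {S : Multiset (Fin F) // Multiset.card S ≤ n},
      A ≠ B ∧ ∀ φ ∈ Φ, φ (f A) = φ (f B) := by
  classical
  have hNpos : 0 < N := by
    rw [hN]
    exact Finset.sum_pos (fun i _ => Nat.choose_pos (Nat.le_sub_of_add_le
      (by omega))) ⟨0, Finset.mem_range.mpr (by omega)⟩
  -- Show F ^ Φ.card < N
  have hlogF : (0:ℝ) < Real.log F := Real.log_pos (by exact_mod_cast hF)
  have hkey : F ^ Φ.card < N := by
    have h1 : (Φ.card : ℝ) * Real.log F < Real.log N := (lt_div_iff₀ hlogF).mp hΦ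
    have h2 : Real.log ((F:ℝ) ^ Φ.card) < Real.log N := by
      rwa [Real.log_pow]
    have hFpos : (0:ℝ) < (F:ℝ) ^ Φ.card := by positivity
    have := (Real.log_lt_log_iff hFpos (by exact_mod_cast hNpos)).mp h2
    exact_mod_cast this
  -- Pigeonhole on D := Σ i : Fin (n+1), Sym (Fin F) i
  have hcardD : Fintype.card (Σ i : Fin (n + 1), Sym (Fin F) i) = N := by
    rw [Fintype.card_sigma, hN,
      ← Fin.sum_univ_eq_sum_range (fun i => Nat.choose (i + F - 1) i) (n + 1)]
    refine Finset.sum_congr rfl fun i _ => ?_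
    rw [Sym.card_sym_eq_choose, Fintype.card_fin, Nat.add_comm]
  have hcardCod : Fintype.card (Φ → Fin F) = F ^ Φ.card := by
    simp [Fintype.card_fun]
  have hmem : ∀ p : (Σ i : Fin (n + 1), Sym (Fin F) i),
      Multiset.card p.2.1 ≤ n := by
    intro p
    have h1 : Multiset.card p.2.1 = (p.1 : ℕ) := p.2.2
    have h2 : (p.1 : ℕ) < n + 1 := p.1.isLt
    omega
  let g : (Σ i : Fin (n + 1), Sym (Fin F) i) → (Φ → Fin F) := fun p φ =>
    (φ : R → Fin F) (f ⟨p.2.1, hmem p⟩)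
  have hlt : Fintype.card (Φ → Fin F) < Fintype.card (Σ i : Fin (n + 1), Sym (Fin F) i) := by
    rw [hcardD, hcardCod]; exact hkey
  obtain ⟨a, b, hab, hgab⟩ := Fintype.exists_ne_map_eq_of_card_lt g hlt
  refine ⟨⟨a.2.1, hmem a⟩, ⟨b.2.1, hmem b⟩, ?_, ?_⟩
  · intro h
    apply hab
    have hm : a.2.1 = b.2.1 := congrArg Subtype.val h
    have hfst : a.1 = b.1 := by
      have h1 : Multiset.card a.2.1 = (a.1 : ℕ) := a.2.2
      have h2 : Multiset.card b.2.1 = (b.1 : ℕ) := b.2.2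
      rw [hm, h2] at h1
      exact Fin.ext h1.symm
    obtain ⟨a1, a2⟩ := a; obtain ⟨b1, b2⟩ := b
    cases hfst
    exact congrArg _ (Subtype.ext hm)
  · intro φ hφ
    exact congrFun hgab ⟨φ, hφ⟩
end

section
/- Let F ≥ 2 and n ≥ 1 be natural numbers, let R be any type, let f be any function from multisets over {0,…,F−1} of cardinality at most n to R, and let Φ be a finite set of functions from R to {0,…,F−1} such that for every pair of distinct multisets A ≠ B over {0,…,F−1}, each of cardinality at most n, there exists φ ∈ Φ with φ(f(A)) ≠ φ(f(B)). Then F^{|Φ|} ≥ (1 + (F−1)/n)^n; equivalently, |Φ| · log F ≥ n · log(1 + (F−1)/n). -/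
lemma key_descFactorial (m n : ℕ) :
    (m + n) ^ n * n.factorial ≤ n ^ n * (m + n).descFactorial n := by
  calc (m + n) ^ n * n.factorial
      = ∏ i ∈ Finset.range n, ((m + n) * (n - i)) := by
        rw [Finset.prod_mul_distrib, Finset.prod_const, Finset.card_range,
          ← Nat.descFactorial_self n, Nat.descFactorial_eq_prod_range]
    _ ≤ ∏ i ∈ Finset.range n, (n * (m + n - i)) := by
        apply Finset.prod_le_prod'
        intro i hi
        have hi' : i < n := Finset.mem_range.1 hi
        have h1 : i ≤ n := hi'.le
        have h2 : i ≤ m + n := by omega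
        zify [h1, h2]
        nlinarith [mul_nonneg (by positivity : (0:ℤ) ≤ m) (by positivity : (0:ℤ) ≤ i)]
    _ = n ^ n * (m + n).descFactorial n := by
        rw [Finset.prod_mul_distrib, Finset.prod_const, Finset.card_range,
          Nat.descFactorial_eq_prod_range]

lemma key_choose (m n : ℕ) (hn : 1 ≤ n) :
    ((m + n : ℝ) / n) ^ n ≤ ((m + n).choose n : ℝ) := by
  have hnat : (m + n) ^ n ≤ n ^ n * (m + n).choose n := by
    have h := key_descFactorial m n
    rw [Nat.descFactorial_eq_factorial_mul_choose] at h
    have h' : (m + n) ^ n * n.factorial ≤ n ^ n * (m + n).choose n * n.factorial := by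
      calc (m + n) ^ n * n.factorial ≤ n ^ n * (n.factorial * (m + n).choose n) := h
        _ = n ^ n * (m + n).choose n * n.factorial := by ring
    exact Nat.le_of_mul_le_mul_right h' n.factorial_pos
  have hn0 : (0:ℝ) < (n:ℝ) := by positivity
  rw [div_pow, div_le_iff₀ (by positivity)]
  calc ((m:ℝ) + n) ^ n = (((m + n) ^ n : ℕ) : ℝ) := by push_cast; ring
    _ ≤ ((n ^ n * (m + n).choose n : ℕ) : ℝ) := by exact_mod_cast hnat
    _ = ((m + n).choose n : ℝ) * (n:ℝ) ^ n := by push_cast; ring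

/-- If a finite family `Φ` of functions `R → {0,…,F−1}` separates (through an
aggregation function `f`) every pair of distinct multisets over `{0,…,F−1}` of cardinality at
most `n`, then `F^{|Φ|} ≥ (1 + (F−1)/n)^n`. -/
theorem separating_family_lower_bound
    (F n : ℕ) (hF : 2 ≤ F) (hn : 1 ≤ n)
    (R : Type*) (f : {S : Multiset (Fin F) // Multiset.card S ≤ n} → R)
    (Φ : Finset (R → Fin F))
    (hsep : ∀ A B : {S : Multiset (Fin F) // Multiset.card S ≤ n},
      A ≠ B → ∃ φ ∈ Φ, φ (f A) ≠ φ (f B)) :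
    (1 + ((F : ℝ) - 1) / n) ^ n ≤ (F : ℝ) ^ Φ.card := by
  set m := F - 1 with hm
  have hFm : F = m + 1 := by omega
  classical
  -- injective map from Sym (Fin F) n into functions Φ → Fin F
  let g : Sym (Fin F) n → (↥Φ → Fin F) :=
    fun s φ => φ.1 (f ⟨(s : Multiset (Fin F)), s.prop.le⟩)
  have hg : Function.Injective g := by
    intro s t h
    by_contra hne
    have hAB : (⟨(s : Multiset (Fin F)), s.prop.le⟩ : {S : Multiset (Fin F) // Multiset.card S ≤ n})
        ≠ ⟨(t : Multiset (Fin F)), t.prop.le⟩ := by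
      intro he
      apply hne
      exact Sym.coe_injective (Subtype.mk_eq_mk.1 he)
    obtain ⟨φ, hφ, hφne⟩ := hsep _ _ hAB
    exact hφne (congrFun h ⟨φ, hφ⟩)
  have hcard : Fintype.card (Sym (Fin F) n) ≤ F ^ Φ.card := by
    have := Fintype.card_le_of_injective g hg
    rwa [Fintype.card_fun, Fintype.card_coe, Fintype.card_fin] at this
  have hsym : Fintype.card (Sym (Fin F) n) = (m + n).choose n := by
    rw [Sym.card_sym_eq_choose, Fintype.card_fin]
    congr 1
    omega
  have hnat : (m + n).choose n ≤ F ^ Φ.card := hsym ▸ hcard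
  have h1 : (1 + ((F : ℝ) - 1) / n) = ((m : ℝ) + n) / n := by
    have hn0 : (n:ℝ) ≠ 0 := by positivity
    rw [hFm]
    push_cast
    field_simp
    ring
  calc (1 + ((F : ℝ) - 1) / n) ^ n = (((m : ℝ) + n) / n) ^ n := by rw [h1]
    _ ≤ ((m + n).choose n : ℝ) := key_choose m n hn
    _ ≤ ((F ^ Φ.card : ℕ) : ℝ) := by exact_mod_cast hnat
    _ = (F : ℝ) ^ Φ.card := by push_cast; ring
end

section
/- Let m ≥ 1, let M be a finite type, and let O be a countable type. Let f : {1,…,m} → PMF(M) and g : M → PMF(O) be arbitrary (randomized) functions, and for each k define the output distribution p_k = (f k).bind g on O. Suppose that (i) for every k, Σ_{o∈O} p_k(o)^2 ≥ 3/4 (two independent runs for input k agree with probability at least 3/4), and (ii) for every k ≠ ℓ, Σ_{o∈O} p_k(o)·p_ℓ(o) ≤ 1/4 (independent runs for distinct inputs k and ℓ agree with probability at most 1/4). Then the cardinality of M is at least m. -/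
open scoped ENNReal

private lemma aux_bc (b c : ℝ≥0∞) (hb : b ≤ 1) (hc : c ≤ 1) : b + c ≤ b * c + 1 := by
  have h1 : c * b + c * (1 - b) = c := by
    rw [← mul_add, add_tsub_cancel_of_le hb, mul_one]
  have h2 : c ≤ b * c + (1 - b) := by
    conv_lhs => rw [← h1]
    rw [mul_comm c b]
    exact add_le_add_right (mul_le_of_le_one_left zero_le hc) _
  calc b + c ≤ b + (b * c + (1 - b)) := add_le_add_right h2 _
    _ = b * c + (b + (1 - b)) := by ring
    _ = b * c + 1 := by rw [add_tsub_cancel_of_le hb]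

/-- Randomized one-way communication lower bound. If `f : {1,…,m} → PMF M` and
`g : M → PMF O` are such that two independent runs on the same input agree with probability
at least `3/4`, while independent runs on distinct inputs agree with probability at most
`1/4`, then `|M| ≥ m`. -/
theorem randomized_message_lower_bound
    (m : ℕ) (hm : 1 ≤ m) (M : Type*) [Fintype M] (O : Type*) [Countable O]
    (f : Fin m → PMF M) (g : M → PMF O)
    (hsame : ∀ k : Fin m, (3 : ℝ≥0∞) / 4 ≤ ∑' o : O, ((f k).bind g) o * ((f k).bind g) o)
    (hdiff : ∀ k l : Fin m, k ≠ l →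
      ∑' o : O, ((f k).bind g) o * ((f l).bind g) o ≤ (1 : ℝ≥0∞) / 4) :
    m ≤ Fintype.card M := by
  set p : Fin m → O → ℝ≥0∞ := fun k o => ((f k).bind g) o with hp
  -- For each k there is a message x with ⟨g x, p k⟩ ≥ 3/4
  have key : ∀ k : Fin m, ∃ x : M, (3 : ℝ≥0∞) / 4 ≤ ∑' o : O, (g x) o * p k o := by
    intro k
    have hne : Nonempty M := by
      obtain ⟨y, _⟩ := (f k).support_nonempty
      exact ⟨y⟩
    obtain ⟨x₀, _, hx₀⟩ := Finset.exists_max_image (Finset.univ : Finset M)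
      (fun y => ∑' o : O, (g y) o * p k o) ⟨Classical.arbitrary M, Finset.mem_univ _⟩
    refine ⟨x₀, le_trans (hsame k) ?_⟩
    have hswap : ∑' o : O, p k o * p k o
        = ∑' y : M, (f k) y * ∑' o : O, (g y) o * p k o := by
      calc ∑' o : O, p k o * p k o
          = ∑' o : O, (∑' y : M, (f k) y * (g y) o) * p k o := by
            simp only [hp, PMF.bind_apply]
        _ = ∑' o : O, ∑' y : M, (f k) y * ((g y) o * p k o) := by
            congr 1; ext o; simp_rw [← mul_assoc]
            exact ENNReal.tsum_mul_right.symm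
        _ = ∑' y : M, ∑' o : O, (f k) y * ((g y) o * p k o) := ENNReal.tsum_comm
        _ = ∑' y : M, (f k) y * ∑' o : O, (g y) o * p k o := by
            congr 1; ext y; rw [ENNReal.tsum_mul_left]
    calc ∑' o : O, p k o * p k o
        = ∑' y : M, (f k) y * ∑' o : O, (g y) o * p k o := hswap
      _ ≤ ∑' y : M, (f k) y * ∑' o : O, (g x₀) o * p k o :=
          ENNReal.tsum_le_tsum fun y =>
            mul_le_mul_right (hx₀ y (Finset.mem_univ y)) _
      _ = (∑' y : M, (f k) y) * ∑' o : O, (g x₀) o * p k o := ENNReal.tsum_mul_right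
      _ = ∑' o : O, (g x₀) o * p k o := by rw [(f k).tsum_coe, one_mul]
  choose h hh using key
  -- h is injective
  have hinj : Function.Injective h := by
    intro k l hkl
    by_contra hne
    have hk : (3 : ℝ≥0∞) / 4 ≤ ∑' o : O, (g (h k)) o * p k o := hh k
    have hl : (3 : ℝ≥0∞) / 4 ≤ ∑' o : O, (g (h k)) o * p l o := by
      have := hh l; rwa [← hkl] at this
    -- pointwise inequality
    have hpt : ∀ o : O, (g (h k)) o * p k o + (g (h k)) o * p l o
        ≤ (g (h k)) o * (p k o * p l o) + (g (h k)) o := by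
      intro o
      have hb : p k o ≤ 1 := by
        have := ((f k).bind g).coe_le_one o
        simpa [hp] using this
      have hc : p l o ≤ 1 := by
        have := ((f l).bind g).coe_le_one o
        simpa [hp] using this
      calc (g (h k)) o * p k o + (g (h k)) o * p l o
          = (g (h k)) o * (p k o + p l o) := by ring
        _ ≤ (g (h k)) o * (p k o * p l o + 1) :=
            mul_le_mul_right (aux_bc _ _ hb hc) _
        _ = (g (h k)) o * (p k o * p l o) + (g (h k)) o := by ring
    have hsum : (∑' o : O, (g (h k)) o * p k o) + (∑' o : O, (g (h k)) o * p l o)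
        ≤ (∑' o : O, (g (h k)) o * (p k o * p l o)) + 1 := by
      calc (∑' o : O, (g (h k)) o * p k o) + (∑' o : O, (g (h k)) o * p l o)
          = ∑' o : O, ((g (h k)) o * p k o + (g (h k)) o * p l o) := (ENNReal.tsum_add).symm
        _ ≤ ∑' o : O, ((g (h k)) o * (p k o * p l o) + (g (h k)) o) :=
            ENNReal.tsum_le_tsum hpt
        _ = (∑' o : O, (g (h k)) o * (p k o * p l o)) + ∑' o : O, (g (h k)) o :=
            ENNReal.tsum_add
        _ = (∑' o : O, (g (h k)) o * (p k o * p l o)) + 1 := by rw [(g (h k)).tsum_coe]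
    have hC : (∑' o : O, (g (h k)) o * (p k o * p l o)) ≤ (1 : ℝ≥0∞) / 4 := by
      refine le_trans ?_ (hdiff k l hne)
      exact ENNReal.tsum_le_tsum fun o =>
        mul_le_of_le_one_left zero_le ((g (h k)).coe_le_one o)
    have habs : (3 : ℝ≥0∞) / 4 + 3 / 4 ≤ 1 / 4 + 1 :=
      le_trans (add_le_add hk hl) (le_trans hsum (add_le_add_left hC 1))
    have hfin : (3 : ℝ≥0∞) / 4 ≠ ⊤ := by simp [ENNReal.div_eq_top]
    have hfin2 : (1 : ℝ≥0∞) / 4 ≠ ⊤ := by simp [ENNReal.div_eq_top]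
    have hr := ENNReal.toReal_mono (by finiteness) habs
    rw [ENNReal.toReal_add hfin hfin, ENNReal.toReal_add hfin2 (by norm_num)] at hr
    simp [ENNReal.toReal_div] at hr
    norm_num at hr
  have := Fintype.card_le_of_injective h hinj
  simpa using this
end

section
/- Let t ≥ 1 and F ≥ 3 be integers, let ℓ = ⌊F/3⌋, and let R_1, …, R_N be convex subsets of ℝ^t that partition the cube [0, F−1]^t. For each integer a with 0 ≤ a < ℓ and each b ∈ {0,1,…,F−1}^{t−1}, let L_{a,b} ⊆ ℝ^t denote the closed line segment joining the points (3a, b) and (3a+2, b). Then the number of pairs (a, b) for which L_{a,b} is not entirely contained in a single part R_i is at most 2N·F^{t−1}. -/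
private lemma cons_combo {t' : ℕ} (b' : Fin t' → ℝ) (u v p q : ℝ) (h : p + q = 1) :
    (Fin.cons (p * u + q * v) b' : Fin (t' + 1) → ℝ)
      = p • (Fin.cons u b' : Fin (t' + 1) → ℝ) + q • (Fin.cons v b' : Fin (t' + 1) → ℝ) := by
  funext j
  refine Fin.cases ?_ (fun j => ?_) j <;> simp [smul_eq_mul]
  linear_combination (b' j) * h.symm

/-- Let `t = t' + 1 ≥ 1`, `F ≥ 3`, `ℓ = ⌊F/3⌋`, and let `R_1, …, R_N` be
pairwise disjoint convex subsets of `ℝ^t` whose union contains the cube `[0, F−1]^t`.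
For `0 ≤ a < ℓ` and `b ∈ {0,…,F−1}^{t−1}`, let `L_{a,b}` be the closed segment joining
`(3a, b)` to `(3a+2, b)`. Then the number of pairs `(a, b)` such that `L_{a,b}` is not
contained in a single part `R_i` is at most `2·N·F^{t−1}`. -/
theorem bad_segments_count_le
    (t' F N : ℕ) (hF : 3 ≤ F)
    (R : Fin N → Set (Fin (t' + 1) → ℝ))
    (hconv : ∀ i, Convex ℝ (R i))
    (hdisj : ∀ i j, i ≠ j → Disjoint (R i) (R j))
    (hcover : Set.Icc (0 : Fin (t' + 1) → ℝ) (fun _ => (F : ℝ) - 1) ⊆ ⋃ i, R i) :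
    {ab : ℕ × (Fin t' → Fin F) | ab.1 < F / 3 ∧
        ¬ ∃ i : Fin N,
          segment ℝ
            (Fin.cons (3 * (ab.1 : ℝ)) (fun j => ((ab.2 j : ℕ) : ℝ)) : Fin (t' + 1) → ℝ)
            (Fin.cons (3 * (ab.1 : ℝ) + 2) (fun j => ((ab.2 j : ℕ) : ℝ)) : Fin (t' + 1) → ℝ)
          ⊆ R i}.ncard
      ≤ 2 * N * F ^ t' := by
  classical
  set bad := {ab : ℕ × (Fin t' → Fin F) | ab.1 < F / 3 ∧
        ¬ ∃ i : Fin N,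
          segment ℝ
            (Fin.cons (3 * (ab.1 : ℝ)) (fun j => ((ab.2 j : ℕ) : ℝ)) : Fin (t' + 1) → ℝ)
            (Fin.cons (3 * (ab.1 : ℝ) + 2) (fun j => ((ab.2 j : ℕ) : ℝ)) : Fin (t' + 1) → ℝ)
          ⊆ R i} with hbaddef
  have hF1 : (3 : ℝ) ≤ (F : ℝ) := by exact_mod_cast hF
  -- N is nonempty
  have hcube0 : (0 : Fin (t' + 1) → ℝ) ∈ Set.Icc (0 : Fin (t' + 1) → ℝ) (fun _ => (F : ℝ) - 1) := by
    refine ⟨le_refl _, fun j => ?_⟩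
    simp; linarith
  obtain ⟨i0, hi0⟩ := Set.mem_iUnion.mp (hcover hcube0)
  -- slices
  set S : (Fin t' → Fin F) → Fin N → Set ℝ :=
    fun b i => {s : ℝ | (Fin.cons s (fun j => ((b j : ℕ) : ℝ)) : Fin (t' + 1) → ℝ) ∈ R i}
    with hSdef
  have hSconv : ∀ b i, Convex ℝ (S b i) := by
    intro b i u hu v hv p q hp hq hpq
    have := cons_combo (fun j => ((b j : ℕ) : ℝ)) u v p q hpq
    show (Fin.cons (p • u + q • v) _ : Fin (t' + 1) → ℝ) ∈ R i
    simp only [smul_eq_mul]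
    rw [this]
    exact hconv i hu hv hp hq hpq
  -- key: every bad pair yields an i with sSup inside the interval
  have key : ∀ ab : ℕ × (Fin t' → Fin F), ab ∈ bad →
      ∃ i, sSup (S ab.2 i) ∈ Set.Icc (3 * (ab.1 : ℝ)) (3 * (ab.1 : ℝ) + 2) := by
    rintro ⟨a, b⟩ ⟨ha, hnot⟩
    set b' : Fin t' → ℝ := fun j => ((b j : ℕ) : ℝ) with hb'
    have haF : 3 * a + 3 ≤ F := by omega
    -- every s in the interval lies in some slice
    have hmem : ∀ s : ℝ, s ∈ Set.Icc (3 * (a : ℝ)) (3 * (a : ℝ) + 2) → ∃ i, s ∈ S b i := by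
      intro s hs
      have hcube : (Fin.cons s b' : Fin (t' + 1) → ℝ)
          ∈ Set.Icc (0 : Fin (t' + 1) → ℝ) (fun _ => (F : ℝ) - 1) := by
        constructor <;> intro j <;>
          refine Fin.cases ?_ (fun j => ?_) j <;> simp [b']
        · have : (0 : ℝ) ≤ 3 * (a : ℝ) := by positivity
          linarith [hs.1]
        · have : (3 * (a : ℝ) + 2) ≤ (F : ℝ) - 1 := by
            have : ((3 * a + 3 : ℕ) : ℝ) ≤ (F : ℝ) := by exact_mod_cast haF
            push_cast at this; linarith
          linarith [hs.2]
        · have : (b j : ℕ) + 1 ≤ F := (b j).2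
          have : ((b j : ℕ) : ℝ) + 1 ≤ (F : ℝ) := by exact_mod_cast this
          linarith
      obtain ⟨i, hi⟩ := Set.mem_iUnion.mp (hcover hcube)
      exact ⟨i, hi⟩
    -- no slice contains the whole interval
    have hnotsub : ∀ i, ¬ Set.Icc (3 * (a : ℝ)) (3 * (a : ℝ) + 2) ⊆ S b i := by
      intro i hsub
      apply hnot
      refine ⟨i, ?_⟩
      rintro x ⟨u, v, hu, hv, huv, rfl⟩
      have h1 := cons_combo b' (3 * (a : ℝ)) (3 * (a : ℝ) + 2) u v huv
      rw [← h1]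
      apply hsub
      constructor <;> nlinarith
    -- pick i containing 3a, find exit point
    obtain ⟨i, hi3a⟩ := hmem (3 * (a : ℝ)) ⟨le_refl _, by linarith⟩
    obtain ⟨y, hy, hyn⟩ := Set.not_subset.mp (hnotsub i)
    have hlt : 3 * (a : ℝ) < y := lt_of_le_of_ne hy.1 (by rintro rfl; exact hyn hi3a)
    have hub : ∀ z ∈ S b i, z ≤ y := by
      intro z hz
      by_contra hzy
      push_neg at hzy
      exact hyn (((hSconv b i).ordConnected).out hi3a hz ⟨le_of_lt hlt, le_of_lt hzy⟩)
    refine ⟨i, le_csSup ⟨y, hub⟩ hi3a, ?_⟩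
    have := csSup_le ⟨_, hi3a⟩ hub
    linarith [hy.2]
  -- build injection
  have hN : Nonempty (Fin N) := ⟨i0⟩
  set g : ℕ × (Fin t' → Fin F) → Fin N × (Fin t' → Fin F) :=
    fun ab => if h : ab ∈ bad then (Classical.choose (key ab h), ab.2) else (i0, fun _ => (⟨0, by omega⟩ : Fin F)) with hg
  have hmaps : ∀ ab ∈ bad, g ab ∈ (Set.univ : Set (Fin N × (Fin t' → Fin F))) := fun _ _ => trivial
  have hinj : Set.InjOn g bad := by
    intro ab1 h1 ab2 h2 heq
    rw [hg] at heq
    simp only [dif_pos h1, dif_pos h2, Prod.mk.injEq] at heq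
    obtain ⟨hie, hbe⟩ := heq
    obtain ⟨a1, b1⟩ := ab1
    obtain ⟨a2, b2⟩ := ab2
    simp only at hie hbe
    subst hbe
    have hs1 := Classical.choose_spec (key (a1, b1) h1)
    have hs2 := Classical.choose_spec (key (a2, b1) h2)
    rw [hie] at hs1
    have e1 : (3 * (a1 : ℝ)) ≤ 3 * (a2 : ℝ) + 2 := le_trans hs1.1 hs2.2
    have e2 : (3 * (a2 : ℝ)) ≤ 3 * (a1 : ℝ) + 2 := le_trans hs2.1 hs1.2
    have n1 : 3 * a1 ≤ 3 * a2 + 2 := by exact_mod_cast (by push_cast; linarith : ((3 * a1 : ℕ) : ℝ) ≤ ((3 * a2 + 2 : ℕ) : ℝ))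
    have n2 : 3 * a2 ≤ 3 * a1 + 2 := by exact_mod_cast (by push_cast; linarith : ((3 * a2 : ℕ) : ℝ) ≤ ((3 * a1 + 2 : ℕ) : ℝ))
    have : a1 = a2 := by omega
    simp [this]
  have hfin : (Set.univ : Set (Fin N × (Fin t' → Fin F))).Finite := Set.finite_univ
  have hle := Set.ncard_le_ncard_of_injOn g hmaps hinj hfin
  have hcard : (Set.univ : Set (Fin N × (Fin t' → Fin F))).ncard = N * F ^ t' := by
    simp [Set.ncard_univ, Nat.card_eq_fintype_card]
  rw [hcard] at hle
  calc bad.ncard ≤ N * F ^ t' := hle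
    _ ≤ 2 * N * F ^ t' := by nlinarith
end
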